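/- Let 0 < Γ ≤ Γ′, let W₂, W₃, W₄, λ₁, M > 0 with W₃ ≠ M·W₂, set p = 1 − e^{−W₂Γ′}, assume p·λ₁·M > 1, and let Z > 0 satisfy Z = p·λ₁·(1 − e^{−Z M}). Let γ_SR, γ_SD, H, B be independent random variables where γ_SR is exponential with rate W₄, γ_SD is exponential with rate W₂, H is exponential with rate W₃, and B has density Z e^{−Z x} on (0,∞). Then, with W₁ = W₃/M, P({γ_SD < Γ′} ∩ {min(γ_SR, min(B, M)·H + γ_SD) < Γ}) = (1 − e^{−W₄ Γ})(1 − e^{−W₂ Γ′}) + e^{−W₄ Γ}·[ e^{−Z M}( (1 − e^{−W₂ Γ}) + W₂(e^{−W₁ Γ} − e^{−W₂ Γ})/(W₁ − W₂) ) + (1 − e^{−Z M})(1 − e^{−W₂ Γ}) + W₂·Z·∫₀^M x e^{−Z x}(e^{−W₂ Γ} − e^{−W₃ Γ/x})/(x W₂ − W₃) dx ]. -/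

import Mathlib

open Real MeasureTheory ProbabilityTheory

section Stmt13AuxSection
open scoped ENNReal NNReal
open Set Filter Topology


namespace Stmt13Aux

noncomputable def F (r t : ℝ) : ℝ := if 0 ≤ t then 1 - Real.exp (-(r*t)) else 0

lemma F_nonneg {r : ℝ} (hr : 0 < r) (t : ℝ) : 0 ≤ F r t := by
  unfold F
  split_ifs with h
  · have : Real.exp (-(r*t)) ≤ 1 := by
      rw [Real.exp_le_one_iff]; nlinarith
    linarith
  · exact le_refl _

lemma F_le_one (r t : ℝ) : F r t ≤ 1 := by
  unfold F
  split_ifs with h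
  · have := Real.exp_pos (-(r*t)); linarith
  · norm_num

lemma measurable_F (r : ℝ) : Measurable (F r) := by
  unfold F
  exact Measurable.ite measurableSet_Ici (by fun_prop) measurable_const

lemma expMeasure_eq (r : ℝ) : expMeasure r = volume.withDensity (exponentialPDF r) := rfl

lemma expMeasure_Iic {r : ℝ} (hr : 0 < r) (t : ℝ) :
    expMeasure r (Iic t) = ENNReal.ofReal (F r t) := by
  rw [expMeasure_eq, withDensity_apply _ measurableSet_Iic,
    lintegral_exponentialPDF_eq_antiDeriv hr t]
  rfl

lemma expMeasure_null {r : ℝ} {s : Set ℝ} (hs : MeasurableSet s) (h : volume s = 0) :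
    expMeasure r s = 0 := by
  rw [expMeasure_eq, withDensity_apply _ hs, setLIntegral_measure_zero _ _ h]

lemma expMeasure_singleton {r : ℝ} (x : ℝ) : expMeasure r {x} = 0 :=
  expMeasure_null (measurableSet_singleton x) (measure_singleton x)

lemma expMeasure_Iio {r : ℝ} (hr : 0 < r) (t : ℝ) :
    expMeasure r (Iio t) = ENNReal.ofReal (F r t) := by
  rw [← Iic_diff_right, measure_diff_null (expMeasure_singleton t), expMeasure_Iic hr]

lemma expMeasure_Iic_zero {r : ℝ} (hr : 0 < r) : expMeasure r (Iic 0) = 0 := by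
  rw [expMeasure_Iic hr]; simp [F]

lemma expMeasure_Ici {r : ℝ} (hr : 0 < r) {t : ℝ} (ht : 0 ≤ t) :
    expMeasure r (Ici t) = ENNReal.ofReal (Real.exp (-(r*t))) := by
  have : IsProbabilityMeasure (expMeasure r) := isProbabilityMeasure_expMeasure hr
  have h1 : expMeasure r (Ici t) = 1 - expMeasure r (Iio t) := by
    rw [← compl_Iio, measure_compl measurableSet_Iio (measure_ne_top _ _), measure_univ]
  rw [h1, expMeasure_Iio hr, F, if_pos ht]
  rw [ENNReal.ofReal_sub _ (Real.exp_pos _).le, ENNReal.ofReal_one]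
  have hle : ENNReal.ofReal (Real.exp (-(r*t))) ≤ 1 := by
    rw [← ENNReal.ofReal_one]
    exact ENNReal.ofReal_le_ofReal (by rw [Real.exp_le_one_iff]; nlinarith)
  rw [ENNReal.sub_sub_cancel ENNReal.one_ne_top hle]


lemma measurable_exponentialPDF (r : ℝ) : Measurable (exponentialPDF r) :=
  (measurable_exponentialPDFReal r).ennreal_ofReal

lemma lintegral_expMeasure {r : ℝ} (hr : 0 < r) {f : ℝ → ℝ≥0∞} (hf : Measurable f) :
    ∫⁻ x, f x ∂(expMeasure r)
      = ∫⁻ x in Ioi 0, ENNReal.ofReal (r * Real.exp (-(r*x))) * f x := by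
  rw [expMeasure_eq, lintegral_withDensity_eq_lintegral_mul _ (measurable_exponentialPDF r) hf,
    ← lintegral_add_compl (exponentialPDF r * f) measurableSet_Ioi (μ := volume), compl_Ioi]
  have h0 : ∫⁻ x in Iic (0:ℝ), (exponentialPDF r * f) x = 0 := by
    have hae : (Iic (0:ℝ) : Set ℝ) =ᵐ[volume] Iio (0:ℝ) := by
      rw [← Iic_diff_right]
      exact ((diff_ae_eq_self).2 (measure_mono_null inter_subset_right Real.volume_singleton)).symm
    rw [setLIntegral_congr hae]
    rw [setLIntegral_congr_fun (g := fun _ => 0) measurableSet_Iio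
      (fun x (hx : x < 0) => by
        simp [exponentialPDF_of_neg hx])]
    simp
  rw [h0, add_zero]
  refine setLIntegral_congr_fun measurableSet_Ioi (fun x (hx : (0:ℝ) < x) => ?_)
  simp [exponentialPDF_of_nonneg hx.le]

lemma hasDerivAt_exp_mul (k x : ℝ) :
    HasDerivAt (fun y => Real.exp (k*y)) (k * Real.exp (k*x)) x := by
  simpa [mul_comm] using ((hasDerivAt_id x).const_mul k).exp

lemma integrableOn_rate_Ioi {r : ℝ} (hr : 0 < r) (a : ℝ) :
    IntegrableOn (fun x => r * Real.exp (-(r*x))) (Ioi a) := by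
  have := (exp_neg_integrableOn_Ioi a hr).const_mul r
  simp only [neg_mul] at this; exact this

lemma integral_rate_Ioi {r : ℝ} (hr : 0 < r) (a : ℝ) :
    ∫ x in Ioi a, r * Real.exp (-(r*x)) = Real.exp (-(r*a)) := by
  have hderiv : ∀ x ∈ Ici a, HasDerivAt (fun y => -Real.exp (-(r*y)))
      (r * Real.exp (-(r*x))) x := by
    intro x _
    simpa [neg_mul, neg_neg] using ((hasDerivAt_exp_mul (-r) x).fun_neg)
  have h1 : Tendsto (fun y : ℝ => r * y) atTop atTop :=
    (tendsto_const_mul_atTop_of_pos hr).2 tendsto_id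
  have htend : Tendsto (fun y => -Real.exp (-(r*y))) atTop (𝓝 0) := by
    simpa using (Real.tendsto_exp_atBot.comp (tendsto_neg_atBot_iff.2 h1)).neg
  have := integral_Ioi_of_hasDerivAt_of_tendsto' hderiv (integrableOn_rate_Ioi hr a) htend
  simpa using this

noncomputable def G (Γ W2 W3 c : ℝ) : ℝ :=
  (1 - Real.exp (-(W2*Γ))) + W2 * c * (Real.exp (-(W2*Γ)) - Real.exp (-(W3*Γ/c))) / (c*W2 - W3)

section Key
variable {Γ W2 W3 c : ℝ}

lemma measurable_phi (W2 W3 c Γ : ℝ) :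
    Measurable (fun h => W3 * Real.exp (-(W3*h)) * F W2 (Γ - c*h)) := by
  exact (by fun_prop : Measurable fun h : ℝ => W3 * Real.exp (-(W3*h))).mul
    ((measurable_F W2).comp (by fun_prop))

lemma key_integrable (hW2 : 0 < W2) (hW3 : 0 < W3) :
    IntegrableOn (fun h => W3 * Real.exp (-(W3*h)) * F W2 (Γ - c*h)) (Ioi 0) := by
  refine Integrable.mono (integrableOn_rate_Ioi hW3 0) ((measurable_phi W2 W3 c Γ).aestronglyMeasurable) ?_
  refine ae_of_all _ (fun h => ?_)
  have h1 : 0 ≤ W3 * Real.exp (-(W3*h)) := by positivity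
  have h2 := F_nonneg hW2 (Γ - c*h)
  have h3 := F_le_one W2 (Γ - c*h)
  rw [Real.norm_eq_abs, Real.norm_eq_abs, abs_of_nonneg (by positivity), abs_of_nonneg h1]
  exact mul_le_of_le_one_right h1 h3

lemma key_eq (hΓ : 0 < Γ) (hW2 : 0 < W2) (hW3 : 0 < W3) (hc : 0 < c) (hcW : c*W2 ≠ W3) :
    ∫ h in Ioi 0, W3 * Real.exp (-(W3*h)) * F W2 (Γ - c*h) = G Γ W2 W3 c := by
  have hk : W2*c - W3 ≠ 0 := by
    intro h; exact hcW (by linarith [sub_eq_zero.1 h, mul_comm W2 c])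
  set T := Γ / c with hT
  have hT0 : 0 < T := div_pos hΓ hc
  have hcT : c * T = Γ := by rw [hT]; field_simp
  have hsplit : (Ioi (0:ℝ)) = Ioc 0 T ∪ Ioi T := (Ioc_union_Ioi_eq_Ioi hT0.le).symm
  rw [hsplit, setIntegral_union (Ioc_disjoint_Ioi le_rfl) measurableSet_Ioi
    ((key_integrable hW2 hW3).mono_set (by rw [hsplit]; exact subset_union_left))
    ((key_integrable hW2 hW3).mono_set (by rw [hsplit]; exact subset_union_right))]
  have hzero : ∫ h in Ioi T, W3 * Real.exp (-(W3*h)) * F W2 (Γ - c*h) = 0 := by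
    rw [setIntegral_congr_fun (g := fun _ => 0) measurableSet_Ioi, integral_zero]
    intro h hh
    have : Γ - c*h < 0 := by
      have : c * T < c * h := by exact (mul_lt_mul_iff_right₀ hc).2 hh
      rw [hcT] at this; linarith
    simp [F, not_le.2 this]
  rw [hzero, add_zero, ← intervalIntegral.integral_of_le hT0.le]
  have hEq : EqOn (fun h => W3 * Real.exp (-(W3*h)) * F W2 (Γ - c*h))
      (fun h => W3 * Real.exp (-(W3*h)) - (W3 * Real.exp (-(W2*Γ))) * Real.exp ((W2*c-W3)*h))
      (uIcc 0 T) := by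
    intro h hh
    rw [uIcc_of_le hT0.le] at hh
    have h0 : 0 ≤ Γ - c*h := by
      have : c * h ≤ c * T := (mul_le_mul_iff_right₀ hc).2 hh.2
      rw [hcT] at this; linarith
    simp only [F, if_pos h0]
    have harg : -(W3*h) + -(W2*(Γ-c*h)) = -(W2*Γ) + (W2*c-W3)*h := by ring
    rw [mul_sub, mul_one, mul_assoc, ← Real.exp_add, harg, Real.exp_add, ← mul_assoc]
  rw [intervalIntegral.integral_congr hEq]
  have hderiv : ∀ x ∈ uIcc (0:ℝ) T,
      HasDerivAt (fun y => -Real.exp (-(W3*y))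
          - (W3 * Real.exp (-(W2*Γ)) / (W2*c - W3)) * Real.exp ((W2*c-W3)*y))
        (W3 * Real.exp (-(W3*x)) - (W3 * Real.exp (-(W2*Γ))) * Real.exp ((W2*c-W3)*x)) x := by
    intro x _
    have d1 : HasDerivAt (fun y => -Real.exp (-(W3*y))) (W3 * Real.exp (-(W3*x))) x := by
      simpa [neg_mul, neg_neg] using (hasDerivAt_exp_mul (-W3) x).fun_neg
    have d2 : HasDerivAt (fun y => (W3 * Real.exp (-(W2*Γ)) / (W2*c - W3)) * Real.exp ((W2*c-W3)*y))
        ((W3 * Real.exp (-(W2*Γ))) * Real.exp ((W2*c-W3)*x)) x := by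
      have := (hasDerivAt_exp_mul (W2*c-W3) x).const_mul (W3 * Real.exp (-(W2*Γ)) / (W2*c - W3))
      refine this.congr_deriv ?_
      field_simp
    exact d1.sub d2
  have hint : IntervalIntegrable (fun x => W3 * Real.exp (-(W3*x))
      - (W3 * Real.exp (-(W2*Γ))) * Real.exp ((W2*c-W3)*x)) volume 0 T :=
    (Continuous.sub (by fun_prop) (by fun_prop)).intervalIntegrable 0 T
  rw [intervalIntegral.integral_eq_sub_of_hasDerivAt hderiv hint]
  have hargT : (W2*c-W3)*T = W2*Γ - W3*Γ/c := by
    rw [hT]; field_simp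
  have hTe : W3 * T = W3*Γ/c := by rw [hT]; ring
  rw [hargT]
  unfold G
  rw [Real.exp_sub, Real.exp_neg (W2*Γ), hTe, Real.exp_neg (W3*Γ/c)]
  simp only [mul_zero, neg_zero, Real.exp_zero, mul_one]
  have hu0 : Real.exp (W2*Γ) ≠ 0 := (Real.exp_pos _).ne'
  have hv0 : Real.exp (W3*Γ/c) ≠ 0 := (Real.exp_pos _).ne'
  revert hu0 hv0
  generalize Real.exp (W2*Γ) = u
  generalize Real.exp (W3*Γ/c) = v
  intro hu0 hv0
  have hk' : c*W2 - W3 ≠ 0 := by rwa [mul_comm]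
  field_simp [hk, hk']
  ring

lemma G_nonneg (hΓ : 0 < Γ) (hW2 : 0 < W2) (hW3 : 0 < W3) (hc : 0 < c) (hcW : c*W2 ≠ W3) :
    0 ≤ G Γ W2 W3 c := by
  rw [← key_eq hΓ hW2 hW3 hc hcW]
  refine setIntegral_nonneg measurableSet_Ioi (fun h _ => ?_)
  exact mul_nonneg (by positivity) (F_nonneg hW2 _)

lemma G_le_one (hΓ : 0 < Γ) (hW2 : 0 < W2) (hW3 : 0 < W3) (hc : 0 < c) (hcW : c*W2 ≠ W3) :
    G Γ W2 W3 c ≤ 1 := by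
  rw [← key_eq hΓ hW2 hW3 hc hcW]
  have h1 : ∫ h in Ioi (0:ℝ), W3 * Real.exp (-(W3*h)) * F W2 (Γ - c*h)
      ≤ ∫ h in Ioi (0:ℝ), W3 * Real.exp (-(W3*h)) := by
    refine setIntegral_mono_on (key_integrable hW2 hW3) (integrableOn_rate_Ioi hW3 0)
      measurableSet_Ioi (fun h _ => ?_)
    exact mul_le_of_le_one_right (by positivity) (F_le_one W2 _)
  have h2 := integral_rate_Ioi hW3 0
  simp only [mul_zero, neg_zero, Real.exp_zero] at h2
  linarith

end Key

lemma integral_rate_Ioc {r : ℝ} (a b : ℝ) (hr : r ≠ 0) :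
    ∫ x in a..b, r * Real.exp (-(r*x)) = Real.exp (-(r*a)) - Real.exp (-(r*b)) := by
  have hderiv : ∀ x ∈ uIcc a b, HasDerivAt (fun y => -Real.exp (-(r*y)))
      (r * Real.exp (-(r*x))) x := by
    intro x _
    simpa [neg_mul, neg_neg] using ((hasDerivAt_exp_mul (-r) x).fun_neg)
  rw [intervalIntegral.integral_eq_sub_of_hasDerivAt hderiv
    ((by fun_prop : Continuous fun x => r * Real.exp (-(r*x))).intervalIntegrable a b)]
  ring

lemma measurable_G (Γ W2 W3 : ℝ) : Measurable (fun c => G Γ W2 W3 c) := by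
  unfold G
  fun_prop

lemma slice_prob {Γ W2 W3 : ℝ} (hΓ : 0 < Γ) (hW2 : 0 < W2) (hW3 : 0 < W3) {c : ℝ}
    (hc : 0 < c) (hcW : c*W2 ≠ W3) :
    ((expMeasure W3).prod (expMeasure W2)) {q : ℝ×ℝ | c * q.1 + q.2 < Γ}
      = ENNReal.ofReal (G Γ W2 W3 c) := by
  have hP2 : IsProbabilityMeasure (expMeasure W2) := isProbabilityMeasure_expMeasure hW2
  have hs : MeasurableSet {q : ℝ×ℝ | c * q.1 + q.2 < Γ} :=
    measurableSet_lt (by fun_prop) measurable_const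
  rw [Measure.prod_apply hs]
  have h1 : ∀ h : ℝ, (Prod.mk h ⁻¹' {q : ℝ×ℝ | c * q.1 + q.2 < Γ}) = Iio (Γ - c*h) := by
    intro h; ext s; simp only [mem_preimage, mem_setOf_eq, mem_Iio]; constructor <;>
      (intro; linarith)
  have h2 : ∀ h : ℝ, expMeasure W2 (Prod.mk h ⁻¹' {q : ℝ×ℝ | c * q.1 + q.2 < Γ})
      = ENNReal.ofReal (F W2 (Γ - c*h)) := by
    intro h; rw [h1 h, expMeasure_Iio hW2]
  rw [lintegral_congr h2,
    lintegral_expMeasure (f := fun h => ENNReal.ofReal (F W2 (Γ - c*h))) hW3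
      (by exact ((measurable_F W2).comp (by fun_prop)).ennreal_ofReal)]
  have h3 : ∀ h : ℝ, ENNReal.ofReal (W3 * Real.exp (-(W3*h))) * ENNReal.ofReal (F W2 (Γ - c*h))
      = ENNReal.ofReal (W3 * Real.exp (-(W3*h)) * F W2 (Γ - c*h)) := by
    intro h; rw [← ENNReal.ofReal_mul (by positivity)]
  rw [lintegral_congr (fun h => h3 h),
    ← ofReal_integral_eq_lintegral_ofReal (key_integrable hW2 hW3)
      (ae_of_all _ (fun h => mul_nonneg (by positivity) (F_nonneg hW2 _))),
    key_eq hΓ hW2 hW3 hc hcW]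

lemma prob_S2 {Γ W2 W3 Z M : ℝ} (hΓ : 0 < Γ) (hW2 : 0 < W2) (hW3 : 0 < W3)
    (hZ : 0 < Z) (hM : 0 < M) (hne : W3 ≠ M * W2) :
    (((expMeasure Z).prod ((expMeasure W3).prod (expMeasure W2)))
        {p : ℝ×ℝ×ℝ | min p.1 M * p.2.1 + p.2.2 < Γ}).toReal
      = Real.exp (-(Z*M)) * G Γ W2 W3 M
          + (1 - Real.exp (-(Z*M))) * (1 - Real.exp (-(W2*Γ)))
          + W2 * Z * ∫ x in (0:ℝ)..M, x * Real.exp (-Z * x) *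
              (Real.exp (-W2 * Γ) - Real.exp (-W3 * Γ / x)) / (x * W2 - W3) := by
  have hP2 : IsProbabilityMeasure (expMeasure W2) := isProbabilityMeasure_expMeasure hW2
  have hP3 : IsProbabilityMeasure (expMeasure W3) := isProbabilityMeasure_expMeasure hW3
  have hs : MeasurableSet {p : ℝ×ℝ×ℝ | min p.1 M * p.2.1 + p.2.2 < Γ} :=
    measurableSet_lt (by fun_prop) measurable_const
  rw [Measure.prod_apply hs]
  -- the slice function
  have hgood : ∀ b : ℝ, 0 < b → b ≠ W3/W2 →
      ((expMeasure W3).prod (expMeasure W2))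
        (Prod.mk b ⁻¹' {p : ℝ×ℝ×ℝ | min p.1 M * p.2.1 + p.2.2 < Γ})
        = ENNReal.ofReal (G Γ W2 W3 (min b M)) := by
    intro b hb hbW
    have hpre : (Prod.mk b ⁻¹' {p : ℝ×ℝ×ℝ | min p.1 M * p.2.1 + p.2.2 < Γ})
        = {q : ℝ×ℝ | min b M * q.1 + q.2 < Γ} := rfl
    have hcpos : 0 < min b M := lt_min hb hM
    have hcW : min b M * W2 ≠ W3 := by
      rcases le_total M b with hMb | hbM
      · rw [min_eq_right hMb]
        intro h; exact hne h.symm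
      · rw [min_eq_left hbM]
        intro h; exact hbW (by field_simp; exact h)
    rw [hpre, slice_prob hΓ hW2 hW3 hcpos hcW]
  -- a.e. rewrite of the slice
  have haeZ : ∀ᵐ b ∂(expMeasure Z), 0 < b ∧ b ≠ W3/W2 := by
    rw [ae_iff]
    refine measure_mono_null (t := Iic 0 ∪ {W3/W2}) (fun b hb => ?_) ?_
    · simp only [mem_setOf_eq, not_and_or, not_lt, not_ne_iff] at hb
      rcases hb with h | h
      · exact Or.inl h
      · exact Or.inr h
    · exact measure_union_null (expMeasure_Iic_zero hZ) (expMeasure_singleton _)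
  rw [lintegral_congr_ae (haeZ.mono (fun b hb => hgood b hb.1 hb.2)),
    lintegral_expMeasure (f := fun b => ENNReal.ofReal (G Γ W2 W3 (min b M))) hZ
      (by exact ((measurable_G Γ W2 W3).comp (by fun_prop)).ennreal_ofReal)]
  have h3 : ∀ b : ℝ, ENNReal.ofReal (Z * Real.exp (-(Z*b))) * ENNReal.ofReal (G Γ W2 W3 (min b M))
      = ENNReal.ofReal (Z * Real.exp (-(Z*b)) * G Γ W2 W3 (min b M)) := by
    intro b; rw [← ENNReal.ofReal_mul (by positivity)]
  rw [lintegral_congr h3]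
  set φB : ℝ → ℝ := fun b => Z * Real.exp (-(Z*b)) * G Γ W2 W3 (min b M) with hφB
  have hmφB : Measurable φB := by
    refine (by fun_prop : Measurable fun b : ℝ => Z * Real.exp (-(Z*b))).mul
      ((measurable_G Γ W2 W3).comp (by fun_prop))
  have haeV : ∀ᵐ b ∂(volume.restrict (Ioi (0:ℝ))), 0 < b ∧ b ≠ W3/W2 := by
    refine (ae_restrict_iff' measurableSet_Ioi).2 ?_
    have h0 : ∀ᵐ b : ℝ ∂volume, b ≠ W3/W2 := by
      rw [ae_iff]
      exact measure_mono_null (t := {W3/W2}) (fun b hb => by simpa using hb)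
        Real.volume_singleton
    exact h0.mono (fun b hb hb0 => ⟨hb0, hb⟩)
  have hGb : ∀ b : ℝ, 0 < b → b ≠ W3/W2 →
      0 ≤ G Γ W2 W3 (min b M) ∧ G Γ W2 W3 (min b M) ≤ 1 := by
    intro b hb hbW
    have hcpos : 0 < min b M := lt_min hb hM
    have hcW : min b M * W2 ≠ W3 := by
      rcases le_total M b with hMb | hbM
      · rw [min_eq_right hMb]; intro h; exact hne h.symm
      · rw [min_eq_left hbM]; intro h; exact hbW (by field_simp; exact h)
    exact ⟨G_nonneg hΓ hW2 hW3 hcpos hcW, G_le_one hΓ hW2 hW3 hcpos hcW⟩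
  have hφBnn : 0 ≤ᵐ[volume.restrict (Ioi (0:ℝ))] φB :=
    haeV.mono (fun b hb => mul_nonneg (by positivity) (hGb b hb.1 hb.2).1)
  have hint : IntegrableOn φB (Ioi 0) := by
    refine Integrable.mono (integrableOn_rate_Ioi hZ 0) hmφB.aestronglyMeasurable ?_
    refine haeV.mono (fun b hb => ?_)
    rw [Real.norm_eq_abs, Real.norm_eq_abs,
      abs_of_nonneg (mul_nonneg (by positivity) (hGb b hb.1 hb.2).1),
      abs_of_nonneg (by positivity : (0:ℝ) ≤ Z * Real.exp (-(Z*b)))]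
    exact mul_le_of_le_one_right (by positivity) (hGb b hb.1 hb.2).2
  rw [← ofReal_integral_eq_lintegral_ofReal hint hφBnn,
    ENNReal.toReal_ofReal (integral_nonneg_of_ae hφBnn)]
  -- split the integral at M
  have hsplit : (Ioi (0:ℝ)) = Ioc 0 M ∪ Ioi M := (Ioc_union_Ioi_eq_Ioi hM.le).symm
  rw [hsplit, setIntegral_union (Ioc_disjoint_Ioi le_rfl) measurableSet_Ioi
    (hint.mono_set (by rw [hsplit]; exact subset_union_left))
    (hint.mono_set (by rw [hsplit]; exact subset_union_right))]
  -- the Ioi M part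
  have hIoiM : ∫ b in Ioi M, φB b = Real.exp (-(Z*M)) * G Γ W2 W3 M := by
    rw [setIntegral_congr_fun (g := fun b => Z * Real.exp (-(Z*b)) * G Γ W2 W3 M)
      measurableSet_Ioi (fun b hb => by
        rw [hφB]; simp only []
        rw [min_eq_right (le_of_lt hb)]),
      integral_mul_const, integral_rate_Ioi hZ M]
  -- the Ioc 0 M part
  have f1 : ℝ → ℝ := fun b => Z * Real.exp (-(Z*b)) * (1 - Real.exp (-(W2*Γ)))
  have hIoc : ∫ b in Ioc 0 M, φB b
      = (1 - Real.exp (-(Z*M))) * (1 - Real.exp (-(W2*Γ)))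
        + W2 * Z * ∫ x in (0:ℝ)..M, x * Real.exp (-Z * x) *
            (Real.exp (-W2 * Γ) - Real.exp (-W3 * Γ / x)) / (x * W2 - W3) := by
    have hmin : ∀ b ∈ Ioc (0:ℝ) M, φB b = Z * Real.exp (-(Z*b)) * G Γ W2 W3 b := by
      intro b hb
      rw [hφB]; simp only []
      rw [min_eq_left hb.2]
    rw [setIntegral_congr_fun measurableSet_Ioc hmin]
    have hid : ∀ b : ℝ, Z * Real.exp (-(Z*b)) * G Γ W2 W3 b
        = Z * Real.exp (-(Z*b)) * (1 - Real.exp (-(W2*Γ)))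
          + W2 * Z * (b * Real.exp (-Z * b) *
            (Real.exp (-W2 * Γ) - Real.exp (-W3 * Γ / b)) / (b * W2 - W3)) := by
      intro b
      unfold G
      rw [show Real.exp (-Z*b) = Real.exp (-(Z*b)) by ring_nf,
        show Real.exp (-W2*Γ) = Real.exp (-(W2*Γ)) by ring_nf,
        show Real.exp (-W3*Γ/b) = Real.exp (-(W3*Γ/b)) by ring_nf]
      ring
    have hintA : IntegrableOn (fun b => Z * Real.exp (-(Z*b)) * (1 - Real.exp (-(W2*Γ))))
        (Ioc 0 M) := (by fun_prop : Continuous fun b : ℝ =>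
          Z * Real.exp (-(Z*b)) * (1 - Real.exp (-(W2*Γ)))).integrableOn_Ioc
    have hintφ : IntegrableOn (fun b => Z * Real.exp (-(Z*b)) * G Γ W2 W3 b) (Ioc 0 M) :=
      (hint.mono_set (by rw [hsplit]; exact subset_union_left)).congr_fun hmin measurableSet_Ioc
    have hintB : IntegrableOn (fun b => W2 * Z * (b * Real.exp (-Z * b) *
        (Real.exp (-W2 * Γ) - Real.exp (-W3 * Γ / b)) / (b * W2 - W3))) (Ioc 0 M) := by
      refine (hintφ.sub hintA).congr (ae_of_all _ (fun b => ?_))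
      simp only [Pi.sub_apply]
      have := hid b; linarith
    rw [show (fun b => Z * Real.exp (-(Z*b)) * G Γ W2 W3 b)
        = (fun b => Z * Real.exp (-(Z*b)) * (1 - Real.exp (-(W2*Γ)))
          + W2 * Z * (b * Real.exp (-Z * b) *
            (Real.exp (-W2 * Γ) - Real.exp (-W3 * Γ / b)) / (b * W2 - W3))) from funext hid,
      integral_add hintA hintB]
    congr 1
    · rw [integral_mul_const, ← intervalIntegral.integral_of_le hM.le,
        integral_rate_Ioc 0 M hZ.ne']
      simp [mul_comm]
    · rw [← intervalIntegral.integral_of_le hM.le, intervalIntegral.integral_const_mul]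
  rw [hIoc, hIoiM]
  ring

lemma expMeasure_Iio' {r t : ℝ} (hr : 0 < r) (ht : 0 ≤ t) :
    expMeasure r (Iio t) = ENNReal.ofReal (1 - Real.exp (-(r*t))) := by
  rw [expMeasure_Iio hr]; simp [F, ht]

end Stmt13Aux



end Stmt13AuxSection

open scoped ENNReal NNReal in
open Stmt13Aux Set Filter Topology in
/-- Outage probability of the HSU architecture with the incremental best-effort
policy in the stable-buffer case `φ = p λ₁ M > 1` (Eq. (20)).  Here `p = 1 - exp(-W₂Γ')`,
`Z` is the stationary-buffer exponent, the relayed SNR is `min(B, M)·H`, and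
`W₁ = W₃/M`. -/
theorem stmt13 {Ω : Type*} [MeasurableSpace Ω] (P : Measure Ω) [IsProbabilityMeasure P]
    (Γ Γ' W2 W3 W4 lam M Z : ℝ)
    (hΓ : 0 < Γ) (hΓΓ' : Γ ≤ Γ')
    (hW2 : 0 < W2) (hW3 : 0 < W3) (hW4 : 0 < W4) (hlam : 0 < lam) (hM : 0 < M)
    (hne : W3 ≠ M * W2)
    (hphi : 1 < (1 - Real.exp (-W2 * Γ')) * lam * M)
    (hZpos : 0 < Z)
    (hZeq : Z = (1 - Real.exp (-W2 * Γ')) * lam * (1 - Real.exp (-Z * M)))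
    (γSR γSD H B : Ω → ℝ)
    (hmSR : Measurable γSR) (hmSD : Measurable γSD)
    (hmH : Measurable H) (hmB : Measurable B)
    (hindep : iIndepFun ![γSR, γSD, H, B] P)
    (hdSR : Measure.map γSR P = expMeasure W4)
    (hdSD : Measure.map γSD P = expMeasure W2)
    (hdH : Measure.map H P = expMeasure W3)
    (hdB : Measure.map B P = expMeasure Z) :
    (P ({ω | γSD ω < Γ'} ∩
        {ω | min (γSR ω) (min (B ω) M * H ω + γSD ω) < Γ})).toReal
      = (1 - Real.exp (-W4 * Γ)) * (1 - Real.exp (-W2 * Γ'))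
        + Real.exp (-W4 * Γ) *
          (Real.exp (-Z * M) * ((1 - Real.exp (-W2 * Γ))
              + W2 * (Real.exp (-(W3 / M) * Γ) - Real.exp (-W2 * Γ)) / (W3 / M - W2))
            + (1 - Real.exp (-Z * M)) * (1 - Real.exp (-W2 * Γ))
            + W2 * Z * ∫ x in (0:ℝ)..M,
                x * Real.exp (-Z * x) * (Real.exp (-W2 * Γ) - Real.exp (-W3 * Γ / x))
                  / (x * W2 - W3)) := by
  have hΓ'pos : 0 < Γ' := lt_of_lt_of_le hΓ hΓΓ'
  have hfm : ∀ i, Measurable (![γSR, γSD, H, B] i) := by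
    intro i; fin_cases i <;> assumption
  set T : Ω → ℝ := fun ω => min (B ω) M * H ω + γSD ω with hTdef
  have hmT : Measurable T := ((hmB.min measurable_const).mul hmH).add hmSD
  set A : Set Ω := γSD ⁻¹' (Iio Γ') with hA
  set S1 : Set Ω := γSR ⁻¹' (Iio Γ) with hS1
  set S2 : Set Ω := T ⁻¹' (Iio Γ) with hS2
  have hmA : MeasurableSet A := hmSD measurableSet_Iio
  have hmS1 : MeasurableSet S1 := hmSR measurableSet_Iio
  have hmS2 : MeasurableSet S2 := hmT measurableSet_Iio
  have hEvent : {ω | γSD ω < Γ'} ∩ {ω | min (γSR ω) (min (B ω) M * H ω + γSD ω) < Γ}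
      = (A ∩ S1) ∪ (A ∩ (S2 \ S1)) := by
    ext ω
    simp only [hA, hS1, hS2, hTdef, mem_inter_iff, mem_union, mem_setOf_eq, mem_preimage,
      mem_Iio, min_lt_iff, mem_diff]
    tauto
  rw [hEvent, measure_union
    (disjoint_sdiff_self_right.mono inter_subset_right inter_subset_right)
    (hmA.inter (hmS2.diff hmS1))]
  -- first term
  have hind10 : IndepFun γSD γSR P := hindep.indepFun (show (1 : Fin 4) ≠ 0 by decide)
  have h1 : P (A ∩ S1) = ENNReal.ofReal (1 - Real.exp (-(W2*Γ')))
      * ENNReal.ofReal (1 - Real.exp (-(W4*Γ))) := by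
    rw [hA, hS1, hind10.measure_inter_preimage_eq_mul _ _ measurableSet_Iio measurableSet_Iio,
      ← Measure.map_apply hmSD measurableSet_Iio, ← Measure.map_apply hmSR measurableSet_Iio,
      hdSD, hdSR, expMeasure_Iio' hW2 hΓ'pos.le, expMeasure_Iio' hW4 hΓ.le]
  -- a.e. positivity
  have haeB : ∀ᵐ ω ∂P, 0 < B ω := by
    rw [ae_iff]
    have hset : {ω | ¬ 0 < B ω} = B ⁻¹' (Iic 0) := by ext ω; simp [not_lt]
    rw [hset, ← Measure.map_apply hmB measurableSet_Iic, hdB, expMeasure_Iic_zero hZpos]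
  have haeH : ∀ᵐ ω ∂P, 0 < H ω := by
    rw [ae_iff]
    have hset : {ω | ¬ 0 < H ω} = H ⁻¹' (Iic 0) := by ext ω; simp [not_lt]
    rw [hset, ← Measure.map_apply hmH measurableSet_Iic, hdH, expMeasure_Iic_zero hW3]
  have hcongr : P (A ∩ (S2 \ S1)) = P (S2 \ S1) := by
    refine measure_congr (eventuallyEq_set.2 ((haeB.and haeH).mono (fun ω hω => ?_)))
    simp only [hA, hS2, hS1, hTdef, mem_inter_iff, mem_diff, mem_preimage, mem_Iio]
    constructor
    · rintro ⟨-, h⟩; exact h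
    · rintro ⟨h2, h1⟩
      refine ⟨?_, h2, h1⟩
      have hmin : 0 ≤ min (B ω) M * H ω :=
        mul_nonneg (le_min hω.1.le hM.le) hω.2.le
      linarith
  rw [hcongr]
  -- independence of γSR and T
  have hind0T : IndepFun γSR T P := by
    have h := hindep.indepFun_finset {0} {1, 2, 3} (by decide) hfm
    have hφ : Measurable (fun v : (({0} : Finset (Fin 4)) : Type) → ℝ =>
        v ⟨0, by decide⟩) := measurable_pi_apply _
    have hψ : Measurable (fun v : (({1, 2, 3} : Finset (Fin 4)) : Type) → ℝ =>
        min (v ⟨3, by decide⟩) M * v ⟨2, by decide⟩ + v ⟨1, by decide⟩) := by fun_prop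
    exact h.comp hφ hψ
  have hset2 : S2 \ S1 = γSR ⁻¹' (Ici Γ) ∩ T ⁻¹' (Iio Γ) := by
    ext ω
    simp only [hS1, hS2, mem_diff, mem_inter_iff, mem_preimage, mem_Iio, mem_Ici, not_lt]
    tauto
  rw [hset2, hind0T.measure_inter_preimage_eq_mul _ _ measurableSet_Ici measurableSet_Iio,
    ← Measure.map_apply hmSR measurableSet_Ici, hdSR, expMeasure_Ici hW4 hΓ.le]
  -- joint law of (B, (H, γSD))
  have hs' : MeasurableSet {p : ℝ×ℝ×ℝ | min p.1 M * p.2.1 + p.2.2 < Γ} :=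
    measurableSet_lt (by fun_prop) measurable_const
  have hmpair : Measurable fun ω => (B ω, (H ω, γSD ω)) := hmB.prodMk (hmH.prodMk hmSD)
  have hHS : IndepFun H γSD P := hindep.indepFun (show (2 : Fin 4) ≠ 1 by decide)
  have hmapHS : P.map (fun ω => (H ω, γSD ω)) = (expMeasure W3).prod (expMeasure W2) := by
    rw [← hdH, ← hdSD]
    exact (indepFun_iff_map_prod_eq_prod_map_map hmH.aemeasurable hmSD.aemeasurable).1 hHS
  have hBpair : IndepFun B (fun ω => (H ω, γSD ω)) P :=
    (hindep.indepFun_prodMk hfm 2 1 3 (by decide) (by decide)).symm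
  have hmapAll : P.map (fun ω => (B ω, (H ω, γSD ω)))
      = (expMeasure Z).prod ((expMeasure W3).prod (expMeasure W2)) := by
    rw [← hdB, ← hmapHS]
    exact (indepFun_iff_map_prod_eq_prod_map_map hmB.aemeasurable
      (hmH.prodMk hmSD).aemeasurable).1 hBpair
  have hTpre : T ⁻¹' (Iio Γ)
      = (fun ω => (B ω, (H ω, γSD ω))) ⁻¹' {p : ℝ×ℝ×ℝ | min p.1 M * p.2.1 + p.2.2 < Γ} := rfl
  rw [hTpre, ← Measure.map_apply hmpair hs', hmapAll]
  -- toReal arithmetic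
  have hQfin : ((expMeasure Z).prod ((expMeasure W3).prod (expMeasure W2)))
      {p : ℝ×ℝ×ℝ | min p.1 M * p.2.1 + p.2.2 < Γ} ≠ ⊤ := by
    have hPW2 : IsProbabilityMeasure (expMeasure W2) := isProbabilityMeasure_expMeasure hW2
    have hPW3 : IsProbabilityMeasure (expMeasure W3) := isProbabilityMeasure_expMeasure hW3
    have hPZ : IsProbabilityMeasure (expMeasure Z) := isProbabilityMeasure_expMeasure hZpos
    exact measure_ne_top _ _
  have hnn1 : (0:ℝ) ≤ 1 - Real.exp (-(W2*Γ')) :=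
    sub_nonneg.2 (Real.exp_le_one_iff.2 (by nlinarith))
  have hnn2 : (0:ℝ) ≤ 1 - Real.exp (-(W4*Γ)) :=
    sub_nonneg.2 (Real.exp_le_one_iff.2 (by nlinarith))
  rw [h1, ENNReal.toReal_add (by finiteness) (ENNReal.mul_ne_top ENNReal.ofReal_ne_top hQfin),
    ENNReal.toReal_mul, ENNReal.toReal_mul, ENNReal.toReal_ofReal hnn1,
    ENNReal.toReal_ofReal hnn2, ENNReal.toReal_ofReal (Real.exp_pos _).le,
    prob_S2 hΓ hW2 hW3 hZpos hM hne]
  -- final algebra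
  have hM0 : M ≠ 0 := hM.ne'
  have hd1 : M * W2 - W3 ≠ 0 := sub_ne_zero_of_ne (fun h => hne (h.symm))
  have hd2 : W3 / M - W2 ≠ 0 := by
    intro h
    apply hd1
    field_simp at h
    linarith
  have hGM : G Γ W2 W3 M = (1 - Real.exp (-W2 * Γ))
      + W2 * (Real.exp (-(W3 / M) * Γ) - Real.exp (-W2 * Γ)) / (W3 / M - W2) := by
    unfold G
    rw [show Real.exp (-W2 * Γ) = Real.exp (-(W2*Γ)) by ring_nf,
      show Real.exp (-(W3 / M) * Γ) = Real.exp (-(W3*Γ/M)) by ring_nf]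
    have hkey : W2 * M * (Real.exp (-(W2*Γ)) - Real.exp (-(W3*Γ/M))) / (M*W2 - W3)
        = W2 * (Real.exp (-(W3*Γ/M)) - Real.exp (-(W2*Γ))) / (W3/M - W2) := by
      rw [div_eq_div_iff hd1 hd2]
      field_simp
      ring
    rw [hkey]
  rw [hGM]
  ring_nf
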